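/- Let K be a field, V a finite-dimensional K-vector space, V₀ ⊆ V a subspace, and P = {g ∈ GL(V) : g(V₀) = V₀} its stabilizer. If s ∈ GL(V) satisfies s·P·s⁻¹ = P, then s(V₀) = V₀. -/
import Mathlib

theorem stabilizer_self_normalizing {K : Type*} [Field K] {V : Type*}
    [AddCommGroup V] [Module K V] [FiniteDimensional K V]
    (V₀ : Submodule K V) (s : V ≃ₗ[K] V)
    (hs : ∀ g : V ≃ₗ[K] V,
      Submodule.map ((s * g * s⁻¹ : V ≃ₗ[K] V) : V →ₗ[K] V) V₀ = V₀ ↔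
        Submodule.map (g : V →ₗ[K] V) V₀ = V₀) :
    Submodule.map (s : V →ₗ[K] V) V₀ = V₀ := by
  classical
  have key : ∀ (e : V ≃ₗ[K] V) (p : Submodule K V),
      Submodule.map (e : V →ₗ[K] V) (Submodule.map (e.symm : V →ₗ[K] V) p) = p := by
    intro e p
    rw [← Submodule.map_comp]
    simp
  have hinv : ((s⁻¹ : V ≃ₗ[K] V) : V →ₗ[K] V) = (s.symm : V →ₗ[K] V) := rfl
  by_contra hV
  set W : Submodule K V := Submodule.map (s.symm : V →ₗ[K] V) V₀ with hWdef
  have hsW : Submodule.map (s : V →ₗ[K] V) W = V₀ := key s V₀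
  have hWne : W ≠ V₀ := by
    intro h
    exact hV (by rw [← h] at hsW ⊢; exact hsW)
  have hrank : Module.finrank K W = Module.finrank K V₀ := by
    rw [hWdef]
    exact LinearEquiv.finrank_map_eq s.symm V₀
  have h1 : ¬ W ≤ V₀ := fun h => hWne (Submodule.eq_of_le_of_finrank_eq h hrank)
  have h2 : ¬ V₀ ≤ W := fun h => hWne (Submodule.eq_of_le_of_finrank_eq h hrank.symm).symm
  obtain ⟨w, hwW, hwV₀⟩ := SetLike.not_le_iff_exists.mp h1
  obtain ⟨v, hvV₀, hvW⟩ := SetLike.not_le_iff_exists.mp h2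
  -- find a functional vanishing on V₀ but not at w
  have hq : V₀.mkQ w ≠ 0 := by
    simpa [Submodule.Quotient.mk_eq_zero] using hwV₀
  obtain ⟨ψ, hψ⟩ : ∃ ψ : Module.Dual K (V ⧸ V₀), ψ (V₀.mkQ w) ≠ 0 := by
    by_contra h
    push_neg at h
    exact hq ((Module.forall_dual_apply_eq_zero_iff K _).mp h)
  set φ : V →ₗ[K] K := ψ ∘ₗ V₀.mkQ with hφdef
  have hφV₀ : ∀ x ∈ V₀, φ x = 0 := by
    intro x hx
    simp [hφdef, (Submodule.Quotient.mk_eq_zero V₀).mpr hx]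
  have hφv : φ v = 0 := hφV₀ v hvV₀
  have hφw : φ w ≠ 0 := hψ
  -- the transvection g x = x + φ x • v
  set f : V →ₗ[K] V := LinearMap.id + φ.smulRight v with hfdef
  set f' : V →ₗ[K] V := LinearMap.id - φ.smulRight v with hf'def
  have hff' : ∀ x, f (f' x) = x := by
    intro x
    simp [hfdef, hf'def, map_sub, hφv, smul_smul, sub_add_cancel]
  have hf'f : ∀ x, f' (f x) = x := by
    intro x
    simp [hfdef, hf'def, map_add, hφv, smul_smul, add_sub_cancel_right]
  set g : V ≃ₗ[K] V := LinearEquiv.ofLinear f f'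
    (LinearMap.ext hff') (LinearMap.ext hf'f) with hgdef
  have hgcoe : (g : V →ₗ[K] V) = f := rfl
  have hgapp : ∀ x, g x = x + φ x • v := by
    intro x
    simp [hgdef, hfdef]
  have hgV₀ : Submodule.map (g : V →ₗ[K] V) V₀ = V₀ := by
    apply le_antisymm
    · rintro _ ⟨x, hx, rfl⟩
      show g x ∈ V₀
      rw [hgapp x, hφV₀ x hx]
      simpa using hx
    · intro x hx
      exact ⟨x, hx, by rw [show (g : V →ₗ[K] V) x = g x from rfl, hgapp x, hφV₀ x hx]; simp⟩
  have hconj := (hs g).mpr hgV₀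
  have hcomp : ((s * g * s⁻¹ : V ≃ₗ[K] V) : V →ₗ[K] V)
      = (s : V →ₗ[K] V) ∘ₗ (g : V →ₗ[K] V) ∘ₗ (s.symm : V →ₗ[K] V) := rfl
  rw [hcomp, Submodule.map_comp, Submodule.map_comp] at hconj
  -- hconj : map s (map g W) = V₀ = map s W
  have hmapg : Submodule.map (g : V →ₗ[K] V) W = W := by
    have : Submodule.map (s : V →ₗ[K] V) (Submodule.map (g : V →ₗ[K] V) W)
        = Submodule.map (s : V →ₗ[K] V) W := by
      rw [hsW]; exact hconj
    have hinj := Submodule.map_injective_of_injective (f := (s : V →ₗ[K] V)) s.injective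
    exact hinj this
  -- but g w ∉ W
  have hgw : g w ∈ W := by
    rw [← hmapg]
    exact ⟨w, hwW, rfl⟩
  rw [hgapp w] at hgw
  have : φ w • v ∈ W := by
    have := W.sub_mem hgw hwW
    simpa using this
  exact hvW (by simpa [hφw] using W.smul_mem (φ w)⁻¹ this)
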